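/- Let N ≥ 1 be an integer and let s ∈ (0,1) with N > 2s, and let σ be a real number with 0 < σ < N − 2s. Then there exists a constant C > 0, depending only on N, s, σ, such that for every y ∈ ℝ^N, ∫_{ℝ^N} |y−z|^{−(N−2s)} (1+|z|)^{−(2s+σ)} dz ≤ C (1+|y|)^{−σ}. -/

import Mathlib

open MeasureTheory

section Aux

open Metric Set Module Filter
open scoped ENNReal

variable {E : Type*} [NormedAddCommGroup E] [NormedSpace ℝ E] [FiniteDimensional ℝ E]
  [MeasurableSpace E] [BorelSpace E] {μ : Measure E} [μ.IsAddHaarMeasure]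

theorem aux_half_rpow {R : ℝ} (p : ℝ) (hR : 0 < R) : (R/2) ^ (-p) = 2^p * R^(-p) := by
  rw [Real.div_rpow hR.le (by norm_num) (-p), Real.rpow_neg (by norm_num : (0:ℝ) ≤ 2),
    div_inv_eq_mul, mul_comm]

theorem aux_integrableOn_ball {a : ℝ} (ha : 0 < a) (haN : a < finrank ℝ E) :
    IntegrableOn (fun x : E => ‖x‖ ^ (-a)) (ball 0 1) μ := by
  have hmeas : Measurable fun x : E => ‖x‖ ^ (-a) := by fun_prop
  have hexp : ((-a)⁻¹ * (finrank ℝ E : ℝ)) < -1 := by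
    rw [inv_neg, neg_mul, neg_lt_neg_iff, ← div_eq_inv_mul, lt_div_iff₀ ha, one_mul]
    exact haN
  constructor
  · exact (hmeas.aestronglyMeasurable).restrict
  · have hnn : ∀ x : E, 0 ≤ ‖x‖ ^ (-a) := fun x => Real.rpow_nonneg (norm_nonneg x) _
    rw [HasFiniteIntegral]
    have h1 : (∫⁻ x in ball (0:E) 1, ‖(‖x‖ ^ (-a) : ℝ)‖ₑ ∂μ)
        = ∫⁻ x in ball (0:E) 1, ENNReal.ofReal (‖x‖ ^ (-a)) ∂μ :=
      lintegral_enorm_of_nonneg fun x => hnn x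
    rw [h1, lintegral_eq_lintegral_meas_le _ (Eventually.of_forall hnn) hmeas.aemeasurable]
    set ν := μ.restrict (ball (0:E) 1) with hν
    have key : ∀ t : ℝ, 0 < t →
        ν {x : E | t ≤ ‖x‖ ^ (-a)} ≤ μ (closedBall (0:E) (t ^ (-a)⁻¹)) := by
      intro t ht
      refine le_trans (Measure.restrict_apply_le _ _) (measure_mono ?_)
      intro x hx
      simp only [mem_setOf_eq] at hx
      have hx0 : x ≠ 0 := by
        rintro rfl
        rw [norm_zero, Real.zero_rpow (neg_ne_zero.2 ha.ne')] at hx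
        exact absurd hx (not_le.2 ht)
      have hxn : 0 < ‖x‖ := norm_pos_iff.2 hx0
      rw [mem_closedBall_zero_iff]
      exact (Real.le_rpow_inv_iff_of_neg hxn ht (by linarith : -a < 0)).2 hx
    calc ∫⁻ t in Ioi (0:ℝ), ν {x : E | t ≤ ‖x‖ ^ (-a)}
        ≤ ∫⁻ t in Ioc (0:ℝ) 1 ∪ Ioi 1, ν {x : E | t ≤ ‖x‖ ^ (-a)} :=
          lintegral_mono_set Ioi_subset_Ioc_union_Ioi
      _ ≤ (∫⁻ t in Ioc (0:ℝ) 1, ν {x : E | t ≤ ‖x‖ ^ (-a)})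
          + ∫⁻ t in Ioi (1:ℝ), ν {x : E | t ≤ ‖x‖ ^ (-a)} := lintegral_union_le _ _ _
      _ < ∞ := by
          refine ENNReal.add_lt_top.2 ⟨?_, ?_⟩
          · calc (∫⁻ t in Ioc (0:ℝ) 1, ν {x : E | t ≤ ‖x‖ ^ (-a)})
                ≤ ∫⁻ _t in Ioc (0:ℝ) 1, μ (ball (0:E) 1) := by
                  refine setLIntegral_mono' measurableSet_Ioc fun t _ => ?_
                  refine le_trans (measure_mono (subset_univ _)) ?_
                  rw [hν, Measure.restrict_apply_univ]
              _ < ∞ := by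
                  rw [setLIntegral_const]
                  exact ENNReal.mul_lt_top measure_ball_lt_top (by simp [Real.volume_Ioc])
          · calc (∫⁻ t in Ioi (1:ℝ), ν {x : E | t ≤ ‖x‖ ^ (-a)})
                ≤ ∫⁻ t in Ioi (1:ℝ),
                    ENNReal.ofReal (t ^ ((-a)⁻¹ * (finrank ℝ E : ℝ))) * μ (ball (0:E) 1) := by
                  refine setLIntegral_mono' measurableSet_Ioi fun t ht => ?_
                  rw [mem_Ioi] at ht
                  have ht0 : (0:ℝ) < t := lt_trans one_pos ht
                  refine (key t ht0).trans ?_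
                  rw [Measure.addHaar_closedBall _ _ (Real.rpow_nonneg ht0.le _),
                    ← Real.rpow_natCast (t ^ (-a)⁻¹) (finrank ℝ E),
                    ← Real.rpow_mul ht0.le]
              _ < ∞ := by
                  rw [lintegral_mul_const' _ _ measure_ball_lt_top.ne]
                  refine ENNReal.mul_lt_top ?_ measure_ball_lt_top
                  exact IntegrableOn.setLIntegral_lt_top
                    (integrableOn_Ioi_rpow_of_lt hexp one_pos)

theorem aux_integrableOn_compl {q : ℝ} (hq : (finrank ℝ E : ℝ) < q) :
    IntegrableOn (fun x : E => ‖x‖ ^ (-q)) (ball 0 1)ᶜ μ := by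
  refine Integrable.mono' (((integrable_one_add_norm (μ := μ) hq).const_mul
    ((2:ℝ) ^ q)).integrableOn) ((by fun_prop : Measurable fun x : E => ‖x‖ ^ (-q))
      |>.aestronglyMeasurable.restrict) ?_
  filter_upwards [ae_restrict_mem measurableSet_ball.compl] with x hx
  rw [mem_compl_iff, mem_ball_zero_iff, not_lt] at hx
  have hx0 : (0:ℝ) < ‖x‖ := lt_of_lt_of_le one_pos hx
  have hq0 : (0:ℝ) ≤ q := le_trans (Nat.cast_nonneg _) hq.le
  rw [Real.norm_eq_abs, abs_of_nonneg (Real.rpow_nonneg (norm_nonneg x) _)]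
  have h3 : ((1 + ‖x‖)/2) ^ q ≤ ‖x‖ ^ q := Real.rpow_le_rpow (by positivity) (by linarith) hq0
  have h4 : ((1 + ‖x‖)/2) ^ q = (1 + ‖x‖) ^ q / 2 ^ q :=
    Real.div_rpow (by positivity) (by norm_num) q
  have h5 : (‖x‖ ^ q)⁻¹ ≤ (((1 + ‖x‖)/2) ^ q)⁻¹ := by gcongr
  rw [h4, inv_div, div_eq_mul_inv] at h5
  rw [Real.rpow_neg hx0.le, Real.rpow_neg (by positivity : (0:ℝ) ≤ 1 + ‖x‖)]
  exact h5

theorem aux_scale {p R : ℝ} (hR : 0 < R) {S T : Set E} (hS : MeasurableSet S)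
    (hT : MeasurableSet T) (hmem : ∀ x : E, R⁻¹ • x ∈ S ↔ x ∈ T)
    (hint : IntegrableOn (fun x : E => ‖x‖ ^ (-p)) S μ) :
    IntegrableOn (fun x : E => ‖x‖ ^ (-p)) T μ ∧
      (∫ x in T, ‖x‖ ^ (-p) ∂μ) = R ^ ((finrank ℝ E : ℝ) - p) * ∫ x in S, ‖x‖ ^ (-p) ∂μ := by
  set f := fun x : E => ‖x‖ ^ (-p) with hf
  have hg : Integrable (S.indicator f) μ := (integrable_indicator_iff hS).2 hint
  have hRp : (0:ℝ) < R ^ p := Real.rpow_pos_of_pos hR p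
  have hinv : (R⁻¹ : ℝ) ^ (-p) = R ^ p := by
    rw [Real.inv_rpow hR.le, Real.rpow_neg hR.le, inv_inv]
  have hid : (fun x => S.indicator f (R⁻¹ • x)) = fun x => R ^ p * T.indicator f x := by
    funext x
    by_cases hx : x ∈ T
    · rw [indicator_of_mem hx, indicator_of_mem ((hmem x).2 hx)]
      simp only [hf, norm_smul, norm_inv, Real.norm_eq_abs, abs_of_pos hR]
      rw [Real.mul_rpow (by positivity) (norm_nonneg x), hinv]
    · rw [indicator_of_notMem hx, indicator_of_notMem (fun h => hx ((hmem x).1 h)), mul_zero]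
  have hgi : Integrable (fun x => S.indicator f (R⁻¹ • x)) μ := hg.comp_smul (inv_ne_zero hR.ne')
  have hTind : Integrable (T.indicator f) μ := by
    have heq : T.indicator f = fun x => (R ^ p)⁻¹ * S.indicator f (R⁻¹ • x) := by
      funext x
      rw [congrFun hid x]
      field_simp
    rw [heq]
    exact hgi.const_mul _
  refine ⟨(integrable_indicator_iff hT).1 hTind, ?_⟩
  have hI := Measure.integral_comp_inv_smul_of_nonneg μ (S.indicator f) hR.le
  rw [hid, integral_const_mul, integral_indicator hT, integral_indicator hS, smul_eq_mul] at hI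
  have hrw : R ^ ((finrank ℝ E : ℝ) - p) = (R:ℝ) ^ (finrank ℝ E) * (R ^ p)⁻¹ := by
    rw [Real.rpow_sub hR, Real.rpow_natCast, div_eq_mul_inv]
  rw [hrw]
  field_simp at hI ⊢
  linarith [hI]

theorem aux_mem_scale_ball {r : ℝ} (hr : 0 < r) (x : E) :
    r⁻¹ • x ∈ ball (0:E) 1 ↔ x ∈ ball (0:E) r := by
  rw [mem_ball_zero_iff, mem_ball_zero_iff, norm_smul, norm_inv, Real.norm_eq_abs,
    abs_of_pos hr, ← div_eq_inv_mul, div_lt_one hr]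

end Aux

set_option maxHeartbeats 2000000 in
/-- For `N ≥ 1`, `s ∈ (0,1)` with `N > 2s` and `0 < σ < N − 2s`,
there is `C > 0` such that for every `y : ℝ^N`,
`∫_{ℝ^N} |y−z|^{−(N−2s)} (1+|z|)^{−(2s+σ)} dz ≤ C (1+|y|)^{−σ}`. -/
theorem stmt_1 (N : ℕ) (hN : 1 ≤ N) (s σ : ℝ) (hs : s ∈ Set.Ioo (0 : ℝ) 1)
    (hNs : 2 * s < N) (hσ0 : 0 < σ) (hσ : σ < N - 2 * s) :
    ∃ C > 0, ∀ y : EuclideanSpace ℝ (Fin N),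
      (∫ z : EuclideanSpace ℝ (Fin N),
          ‖y - z‖ ^ (-((N : ℝ) - 2 * s)) * (1 + ‖z‖) ^ (-(2 * s + σ))) ≤
        C * (1 + ‖y‖) ^ (-σ) := by
  obtain ⟨hs0, hs1⟩ := hs
  have hfr : ((Module.finrank ℝ (EuclideanSpace ℝ (Fin N)) : ℕ) : ℝ) = (N : ℝ) := by
    rw [finrank_euclideanSpace_fin]
  set a := (N:ℝ) - 2*s with ha_def
  set b := 2*s + σ with hb_def
  set q := (N:ℝ) + σ with hq_def
  have ha : 0 < a := by rw [ha_def]; linarith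
  have haN : a < (N:ℝ) := by rw [ha_def]; linarith
  have hb0 : 0 < b := by rw [hb_def]; linarith
  have hbN : b < (N:ℝ) := by rw [hb_def]; linarith
  have hqN : (N:ℝ) < q := by rw [hq_def]; linarith
  -- base integrability on unit ball / complement
  have hK1int : IntegrableOn (fun x : EuclideanSpace ℝ (Fin N) => ‖x‖ ^ (-a))
      (Metric.ball 0 1) volume := aux_integrableOn_ball ha (by rw [hfr]; exact haN)
  have hK2int : IntegrableOn (fun x : EuclideanSpace ℝ (Fin N) => ‖x‖ ^ (-b))
      (Metric.ball 0 1) volume := aux_integrableOn_ball hb0 (by rw [hfr]; exact hbN)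
  have hK3int : IntegrableOn (fun x : EuclideanSpace ℝ (Fin N) => ‖x‖ ^ (-q))
      (Metric.ball 0 1)ᶜ volume := aux_integrableOn_compl (by rw [hfr]; exact hqN)
  set K1 := ∫ x in Metric.ball (0 : EuclideanSpace ℝ (Fin N)) 1, ‖x‖ ^ (-a) with hK1def
  set K2 := ∫ x in Metric.ball (0 : EuclideanSpace ℝ (Fin N)) 1, ‖x‖ ^ (-b) with hK2def
  set K3 := ∫ x in (Metric.ball (0 : EuclideanSpace ℝ (Fin N)) 1)ᶜ, ‖x‖ ^ (-q) with hK3def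
  have hK1nn : 0 ≤ K1 := setIntegral_nonneg measurableSet_ball
    (fun x _ => Real.rpow_nonneg (norm_nonneg x) _)
  have hK2nn : 0 ≤ K2 := setIntegral_nonneg measurableSet_ball
    (fun x _ => Real.rpow_nonneg (norm_nonneg x) _)
  have hK3nn : 0 ≤ K3 := setIntegral_nonneg measurableSet_ball.compl
    (fun x _ => Real.rpow_nonneg (norm_nonneg x) _)
  have h2σ : (0:ℝ) < 2^σ := Real.rpow_pos_of_pos two_pos σ
  have h2a : (0:ℝ) < 2^a := Real.rpow_pos_of_pos two_pos a
  have h2m : (0:ℝ) < 2^(a + (N:ℝ) - b) := Real.rpow_pos_of_pos two_pos _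
  refine ⟨2^σ * K1 + 2^(a + (N:ℝ) - b) * K2 + 2^a * K3 + 1, by nlinarith, fun y => ?_⟩
  haveI : Nontrivial (EuclideanSpace ℝ (Fin N)) :=
    Module.nontrivial_of_finrank_pos (R := ℝ) (by rw [finrank_euclideanSpace_fin]; omega)
  set R := 1 + ‖y‖ with hR_def
  have hR1 : 1 ≤ R := by rw [hR_def]; linarith [norm_nonneg y]
  have hR0 : 0 < R := lt_of_lt_of_le one_pos hR1
  have hR2 : (0:ℝ) < R/2 := by linarith
  have h2R : (0:ℝ) < 2*R := by linarith
  -- scaled integrability and integral values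
  have hscale1 := aux_scale (μ := volume) hR2 measurableSet_ball measurableSet_ball
    (fun x => aux_mem_scale_ball hR2 x) hK1int
  have hscale2 := aux_scale (μ := volume) h2R measurableSet_ball measurableSet_ball
    (fun x => aux_mem_scale_ball h2R x) hK2int
  have hscale3 := aux_scale (μ := volume) h2R measurableSet_ball.compl
    measurableSet_ball.compl
    (fun x => not_iff_not.2 (aux_mem_scale_ball h2R x)) hK3int
  rw [hfr] at hscale1 hscale2 hscale3
  -- the three majorant pieces
  set h1f := (Metric.ball (0 : EuclideanSpace ℝ (Fin N)) (R/2)).indicator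
    (fun w => ‖w‖ ^ (-a)) with hh1def
  have hint_h1 : Integrable h1f volume :=
    (integrable_indicator_iff measurableSet_ball).2 hscale1.1
  have hG1 : Integrable (fun z => (R/2)^(-b) * h1f (y - z)) volume :=
    (hint_h1.comp_sub_left y).const_mul _
  set h2f := (Metric.ball (0 : EuclideanSpace ℝ (Fin N)) (2*R)).indicator
    (fun w => ‖w‖ ^ (-b)) with hh2def
  have hG2 : Integrable (fun z => (R/2)^(-a) * h2f z) volume :=
    ((integrable_indicator_iff measurableSet_ball).2 hscale2.1).const_mul _
  set h3f := ((Metric.ball (0 : EuclideanSpace ℝ (Fin N)) (2*R))ᶜ).indicator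
    (fun w => ‖w‖ ^ (-q)) with hh3def
  have hG3 : Integrable (fun z => 2^a * h3f z) volume :=
    ((integrable_indicator_iff measurableSet_ball.compl).2 hscale3.1).const_mul _
  -- integral values
  have hIG1 : (∫ z : EuclideanSpace ℝ (Fin N), (R/2)^(-b) * h1f (y - z))
      = (R/2)^(-b) * ((R/2)^((N:ℝ)-a) * K1) := by
    rw [integral_const_mul, integral_sub_left_eq_self h1f volume y, hh1def,
      integral_indicator measurableSet_ball, hscale1.2]
  have hIG2 : (∫ z : EuclideanSpace ℝ (Fin N), (R/2)^(-a) * h2f z)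
      = (R/2)^(-a) * ((2*R)^((N:ℝ)-b) * K2) := by
    rw [integral_const_mul, hh2def, integral_indicator measurableSet_ball, hscale2.2]
  have hIG3 : (∫ z : EuclideanSpace ℝ (Fin N), 2^a * h3f z)
      = 2^a * ((2*R)^((N:ℝ)-q) * K3) := by
    rw [integral_const_mul, hh3def, integral_indicator measurableSet_ball.compl, hscale3.2]
  have hRσ : (0:ℝ) ≤ R^(-σ) := Real.rpow_nonneg hR0.le _
  -- bounds on the three integrals
  have hB1 : (∫ z : EuclideanSpace ℝ (Fin N), (R/2)^(-b) * h1f (y - z))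
      ≤ (2^σ * K1) * R^(-σ) := by
    rw [hIG1, ← mul_assoc, ← Real.rpow_add hR2]
    have he : -b + ((N:ℝ) - a) = -σ := by rw [ha_def, hb_def]; ring
    rw [he, aux_half_rpow σ hR0]
    ring_nf
    exact le_refl _
  have hB2 : (∫ z : EuclideanSpace ℝ (Fin N), (R/2)^(-a) * h2f z)
      ≤ (2^(a + (N:ℝ) - b) * K2) * R^(-σ) := by
    rw [hIG2, aux_half_rpow a hR0,
      Real.mul_rpow (by norm_num : (0:ℝ) ≤ 2) hR0.le]
    have he : 2^a * R^(-a) * (2^((N:ℝ)-b) * R^((N:ℝ)-b) * K2)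
        = (2^a * 2^((N:ℝ)-b)) * (R^(-a) * R^((N:ℝ)-b)) * K2 := by ring
    rw [he, ← Real.rpow_add two_pos, ← Real.rpow_add hR0]
    have he2 : a + ((N:ℝ) - b) = a + (N:ℝ) - b := by ring
    have he3 : -a + ((N:ℝ) - b) = -σ := by rw [ha_def, hb_def]; ring
    rw [he2, he3]
    ring_nf
    exact le_refl _
  have hB3 : (∫ z : EuclideanSpace ℝ (Fin N), 2^a * h3f z)
      ≤ (2^a * K3) * R^(-σ) := by
    rw [hIG3]
    have he : (N:ℝ) - q = -σ := by rw [hq_def]; ring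
    rw [he, Real.mul_rpow (by norm_num : (0:ℝ) ≤ 2) hR0.le]
    have h2σ' : (2:ℝ)^(-σ) ≤ 1 :=
      Real.rpow_le_one_of_one_le_of_nonpos one_le_two (by linarith)
    calc 2^a * (2^(-σ) * R^(-σ) * K3) ≤ 2^a * (1 * R^(-σ) * K3) := by
          apply mul_le_mul_of_nonneg_left _ h2a.le
          apply mul_le_mul_of_nonneg_right _ hK3nn
          apply mul_le_mul_of_nonneg_right h2σ' hRσ
      _ = (2^a * K3) * R^(-σ) := by ring
  -- a.e. pointwise bound
  have hae : ∀ᵐ z : EuclideanSpace ℝ (Fin N) ∂volume, z ≠ 0 := by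
    rw [ae_iff]
    simpa [not_not] using measure_singleton (0 : EuclideanSpace ℝ (Fin N))
  have hpt : ∀ᵐ z : EuclideanSpace ℝ (Fin N) ∂volume,
      ‖y - z‖ ^ (-a) * (1 + ‖z‖) ^ (-b)
        ≤ (R/2)^(-b) * h1f (y - z) + (R/2)^(-a) * h2f z + 2^a * h3f z := by
    filter_upwards [hae] with z hz
    have hz0 : 0 < ‖z‖ := norm_pos_iff.2 hz
    have hG1nn : 0 ≤ (R/2)^(-b) * h1f (y - z) :=
      mul_nonneg (Real.rpow_nonneg hR2.le _)
        (Set.indicator_nonneg (fun w _ => Real.rpow_nonneg (norm_nonneg w) _) _)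
    have hG2nn : 0 ≤ (R/2)^(-a) * h2f z :=
      mul_nonneg (Real.rpow_nonneg hR2.le _)
        (Set.indicator_nonneg (fun w _ => Real.rpow_nonneg (norm_nonneg w) _) _)
    have hG3nn : 0 ≤ 2^a * h3f z :=
      mul_nonneg h2a.le
        (Set.indicator_nonneg (fun w _ => Real.rpow_nonneg (norm_nonneg w) _) _)
    have ht2 : (1 + ‖z‖) ^ (-b) ≤ ‖z‖ ^ (-b) :=
      Real.rpow_le_rpow_of_nonpos hz0 (by linarith) (by linarith)
    by_cases hc1 : ‖y - z‖ < R/2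
    · -- near the singularity
      have hmem : y - z ∈ Metric.ball (0 : EuclideanSpace ℝ (Fin N)) (R/2) :=
        mem_ball_zero_iff.2 hc1
      have hzlb : R/2 ≤ 1 + ‖z‖ := by
        have h := norm_sub_norm_le y (y - z)
        rw [sub_sub_cancel] at h
        rw [hR_def] at hc1 ⊢
        linarith
      have hb1 : (1 + ‖z‖) ^ (-b) ≤ (R/2) ^ (-b) :=
        Real.rpow_le_rpow_of_nonpos hR2 hzlb (by linarith)
      have : ‖y - z‖ ^ (-a) * (1 + ‖z‖) ^ (-b) ≤ (R/2)^(-b) * h1f (y - z) := by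
        rw [hh1def, Set.indicator_of_mem hmem, mul_comm]
        exact mul_le_mul_of_nonneg_right hb1 (Real.rpow_nonneg (norm_nonneg _) _)
      linarith
    · by_cases hc2 : ‖z‖ < 2*R
      · -- middle region
        have hmem : z ∈ Metric.ball (0 : EuclideanSpace ℝ (Fin N)) (2*R) :=
          mem_ball_zero_iff.2 hc2
        have ht1 : ‖y - z‖ ^ (-a) ≤ (R/2) ^ (-a) :=
          Real.rpow_le_rpow_of_nonpos hR2 (not_lt.1 hc1) (by linarith)
        have : ‖y - z‖ ^ (-a) * (1 + ‖z‖) ^ (-b) ≤ (R/2)^(-a) * h2f z := by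
          rw [hh2def, Set.indicator_of_mem hmem]
          exact mul_le_mul ht1 ht2 (Real.rpow_nonneg (by positivity) _)
            (Real.rpow_nonneg hR2.le _)
        linarith
      · -- far region
        have hz2R : 2*R ≤ ‖z‖ := not_lt.1 hc2
        have hmem : z ∈ (Metric.ball (0 : EuclideanSpace ℝ (Fin N)) (2*R))ᶜ :=
          fun h => hc2 (mem_ball_zero_iff.1 h)
        have hyz : ‖z‖/2 ≤ ‖y - z‖ := by
          have h := norm_sub_norm_le z y
          rw [norm_sub_rev z y] at h
          rw [hR_def] at hz2R
          linarith
        have ht1 : ‖y - z‖ ^ (-a) ≤ 2^a * ‖z‖ ^ (-a) := by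
          rw [← aux_half_rpow a hz0]
          exact Real.rpow_le_rpow_of_nonpos (by positivity) hyz (by linarith)
        have : ‖y - z‖ ^ (-a) * (1 + ‖z‖) ^ (-b) ≤ 2^a * h3f z := by
          rw [hh3def, Set.indicator_of_mem hmem]
          calc ‖y - z‖ ^ (-a) * (1 + ‖z‖) ^ (-b) ≤ (2^a * ‖z‖ ^ (-a)) * ‖z‖ ^ (-b) :=
                mul_le_mul ht1 ht2 (Real.rpow_nonneg (by positivity) _)
                  (by positivity)
            _ = 2^a * ‖z‖ ^ (-q) := by
                rw [mul_assoc, ← Real.rpow_add hz0]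
                congr 2
                rw [ha_def, hb_def, hq_def]; ring
        linarith
  -- conclude
  have hFnn : ∀ᵐ z : EuclideanSpace ℝ (Fin N) ∂volume,
      0 ≤ ‖y - z‖ ^ (-a) * (1 + ‖z‖) ^ (-b) :=
    Filter.Eventually.of_forall fun z =>
      mul_nonneg (Real.rpow_nonneg (norm_nonneg _) _) (Real.rpow_nonneg (by positivity) _)
  have hGint : Integrable (fun z : EuclideanSpace ℝ (Fin N) =>
      (R/2)^(-b) * h1f (y - z) + (R/2)^(-a) * h2f z + 2^a * h3f z) volume :=
    (hG1.add hG2).add hG3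
  have hG12 : Integrable (fun z : EuclideanSpace ℝ (Fin N) =>
      (R/2)^(-b) * h1f (y - z) + (R/2)^(-a) * h2f z) volume := hG1.add hG2
  have hmain := integral_mono_of_nonneg hFnn hGint hpt
  rw [integral_add hG12 hG3, integral_add hG1 hG2] at hmain
  calc (∫ z : EuclideanSpace ℝ (Fin N), ‖y - z‖ ^ (-a) * (1 + ‖z‖) ^ (-b))
      ≤ (∫ z : EuclideanSpace ℝ (Fin N), (R/2)^(-b) * h1f (y - z))
        + (∫ z : EuclideanSpace ℝ (Fin N), (R/2)^(-a) * h2f z)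
        + (∫ z : EuclideanSpace ℝ (Fin N), 2^a * h3f z) := hmain
    _ ≤ (2^σ * K1) * R^(-σ) + (2^(a + (N:ℝ) - b) * K2) * R^(-σ) + (2^a * K3) * R^(-σ) := by
        linarith
    _ ≤ (2^σ * K1 + 2^(a + (N:ℝ) - b) * K2 + 2^a * K3 + 1) * R^(-σ) := by nlinarith
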